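/- Let C ∈ GL(H) be self-adjoint, {Λ_i} a C-controlled g-frame for H, and suppose CΛ_i* = w_i Λ_i* for scalars w_i and all i ∈ J. Then the sequence (w_i) is positive and semi-normalized: there exist 0 < a ≤ b with a ≤ w_i ≤ b for all i. -/

import Mathlib

open ContinuousLinearMap
local notation "⟪" x ", " y "⟫" => @inner ℂ _ _ x y

theorem stmt19 {H : Type*} [NormedAddCommGroup H] [InnerProductSpace ℂ H] [CompleteSpace H]
    {J : Type*} {Hi : J → Type*} [∀ i, NormedAddCommGroup (Hi i)]
    [∀ i, InnerProductSpace ℂ (Hi i)] [∀ i, CompleteSpace (Hi i)]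
    (Λ : ∀ i, H →L[ℂ] Hi i) (hΛ : ∀ i, Λ i ≠ 0)
    (C Cinv : H →L[ℂ] H) (hC : IsSelfAdjoint C) (hCinv : C * Cinv = 1 ∧ Cinv * C = 1)
    (mCL MCL : ℝ) (hmCL : 0 < mCL)
    (hcontrolled : ∀ f : H,
      Summable (fun i => ⟪Λ i (adjoint C f), Λ i f⟫) ∧
      mCL * ‖f‖ ^ 2 ≤ (∑' i, ⟪Λ i (adjoint C f), Λ i f⟫).re ∧
      (∑' i, ⟪Λ i (adjoint C f), Λ i f⟫).re ≤ MCL * ‖f‖ ^ 2)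
    (w : J → ℂ)
    (hw : ∀ i, C.comp (adjoint (Λ i)) = w i • adjoint (Λ i)) :
    ∃ a b : ℝ, 0 < a ∧ a ≤ b ∧ ∀ i,
      (w i).im = 0 ∧ a ≤ (w i).re ∧ (w i).re ≤ b := by
  by_cases hJ : Nonempty J
  case neg =>
    exact ⟨1, 1, one_pos, le_refl 1, fun i => absurd ⟨i⟩ hJ⟩
  obtain ⟨i₀⟩ := hJ
  obtain ⟨x0, hx0⟩ : ∃ x : H, Λ i₀ x ≠ 0 := by
    by_contra h
    push_neg at h
    exact hΛ i₀ (ContinuousLinearMap.ext fun x => h x)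
  have hx0' : x0 ≠ 0 := fun h => hx0 (by simp [h])
  have hHnt : Nontrivial H := ⟨x0, 0, hx0'⟩
  have hCinv_ne : Cinv ≠ 0 := by
    intro h
    apply hx0'
    have h2 := DFunLike.congr_fun hCinv.2 x0
    simpa [h] using h2.symm
  have hCinvpos : 0 < ‖Cinv‖ := norm_pos_iff.mpr hCinv_ne
  have key : ∀ i, (w i).im = 0 ∧ ‖Cinv‖⁻¹ ≤ (w i).re ∧ (w i).re ≤ ‖C‖ := by
    intro i
    have hadj : adjoint (Λ i) ≠ 0 := by
      intro h
      apply hΛ i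
      have h2 := congrArg adjoint h
      simpa [adjoint_adjoint] using h2
    obtain ⟨g, hg⟩ : ∃ g, adjoint (Λ i) g ≠ 0 := by
      by_contra h; push_neg at h
      exact hadj (ContinuousLinearMap.ext fun g => h g)
    set f := adjoint (Λ i) g with hf
    have hfnorm : 0 < ‖f‖ := norm_pos_iff.mpr hg
    have hCf : C f = w i • f := by
      have h2 := DFunLike.congr_fun (hw i) g
      simpa using h2
    -- norm bounds on ‖w i‖
    have hwub : ‖w i‖ ≤ ‖C‖ := by
      have h1 : ‖w i‖ * ‖f‖ = ‖C f‖ := by rw [hCf, norm_smul]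
      have h2 : ‖C f‖ ≤ ‖C‖ * ‖f‖ := le_opNorm C f
      have := h1.trans_le h2
      exact le_of_mul_le_mul_right (by linarith) hfnorm
    have hwlb : ‖Cinv‖⁻¹ ≤ ‖w i‖ := by
      have h2 : Cinv (C f) = f := by
        have := DFunLike.congr_fun hCinv.2 f
        simpa using this
      rw [hCf, map_smul] at h2
      have h3 : ‖f‖ ≤ ‖w i‖ * (‖Cinv‖ * ‖f‖) := by
        calc ‖f‖ = ‖w i • Cinv f‖ := by rw [h2]
          _ = ‖w i‖ * ‖Cinv f‖ := norm_smul _ _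
          _ ≤ ‖w i‖ * (‖Cinv‖ * ‖f‖) := by
              exact mul_le_mul_of_nonneg_left (le_opNorm Cinv f) (norm_nonneg _)
      rw [inv_le_iff_one_le_mul₀ hCinvpos]
      nlinarith [norm_nonneg (w i)]
    have hwne : w i ≠ 0 := by
      intro h
      rw [h, norm_zero] at hwlb
      exact absurd hwlb (not_le.mpr (by positivity))
    -- imaginary part zero
    have hΛif : Λ i f ≠ 0 := by
      intro h
      apply hg
      rw [← inner_self_eq_zero (𝕜 := ℂ) (x := f)]
      calc ⟪f, f⟫ = ⟪g, Λ i f⟫ := by rw [hf, adjoint_inner_left]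
        _ = 0 := by rw [h, inner_zero_right]
    have hN : ⟪Λ i f, Λ i f⟫ ≠ 0 := by
      rwa [ne_eq, inner_self_eq_zero]
    have hconj : (starRingEnd ℂ) (w i) = w i := by
      have e1 : ⟪Λ i (C f), Λ i f⟫ = (starRingEnd ℂ) (w i) * ⟪Λ i f, Λ i f⟫ := by
        rw [hCf, map_smul, inner_smul_left]
      have e2 : ⟪Λ i (C f), Λ i f⟫ = w i * ⟪Λ i f, Λ i f⟫ := by
        have hpt : C (adjoint (Λ i) (Λ i f)) = w i • adjoint (Λ i) (Λ i f) := by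
          have := DFunLike.congr_fun (hw i) (Λ i f)
          simpa using this
        calc ⟪Λ i (C f), Λ i f⟫ = ⟪C f, adjoint (Λ i) (Λ i f)⟫ :=
              (adjoint_inner_right _ _ _).symm
          _ = ⟪f, C (adjoint (Λ i) (Λ i f))⟫ := by
              conv_lhs => rw [← hC.adjoint_eq]
              rw [adjoint_inner_left]
          _ = ⟪f, w i • adjoint (Λ i) (Λ i f)⟫ := by rw [hpt]
          _ = w i * ⟪f, adjoint (Λ i) (Λ i f)⟫ := inner_smul_right _ _ _
          _ = w i * ⟪Λ i f, Λ i f⟫ := by rw [adjoint_inner_right]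
      have := e1.symm.trans e2
      exact mul_right_cancel₀ hN this
    have him : (w i).im = 0 := by
      have := congrArg Complex.im hconj
      simpa using by linarith [Complex.conj_im (w i), this]
    -- positivity of real part via the frame lower bound
    have hre_pos : 0 < (w i).re := by
      obtain ⟨hsum, hlow, _⟩ := hcontrolled f
      have hterm : ∀ j, ⟪Λ j (adjoint C f), Λ j f⟫
          = (starRingEnd ℂ) (w i) * ⟪Λ j f, Λ j f⟫ := by
        intro j
        rw [hC.adjoint_eq, hCf, map_smul, inner_smul_left]
      have hsum' : Summable (fun j => ⟪Λ j f, Λ j f⟫) := by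
        have h1 : Summable (fun j => (starRingEnd ℂ) (w i) * ⟪Λ j f, Λ j f⟫) := by
          simpa [hterm] using hsum
        have hcne : (starRingEnd ℂ) (w i) ≠ 0 := by
          simpa using hwne
        have := h1.mul_left ((starRingEnd ℂ) (w i))⁻¹
        simpa [← mul_assoc, inv_mul_cancel₀ hcne] using this
      set S : ℂ := ∑' j, ⟪Λ j f, Λ j f⟫ with hS
      have hSre : S.re = ∑' j, (⟪Λ j f, Λ j f⟫).re := Complex.re_tsum hsum'
      have hterm2 : ∀ j, (⟪Λ j f, Λ j f⟫).re = ‖Λ j f‖ ^ 2 ∧ (⟪Λ j f, Λ j f⟫).im = 0 := by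
        intro j
        have h := inner_self_eq_norm_sq_to_K (𝕜 := ℂ) (Λ j f)
        rw [h]
        constructor <;> simp [← Complex.ofReal_pow]
      have hSre_nonneg : 0 ≤ S.re := by
        rw [hSre]
        exact tsum_nonneg fun j => by rw [(hterm2 j).1]; positivity
      have hSim : S.im = 0 := by
        have h := Complex.im_tsum hsum'
        rw [hS, h]
        simp [fun j => (hterm2 j).2, ← Complex.ofReal_pow]
      have htsum : (∑' j, ⟪Λ j (adjoint C f), Λ j f⟫) = (starRingEnd ℂ) (w i) * S := by
        simp only [hterm]
        exact tsum_mul_left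
      rw [htsum] at hlow
      have hre_eq : ((starRingEnd ℂ) (w i) * S).re = (w i).re * S.re := by
        simp [Complex.mul_re, him, hSim]
      rw [hre_eq] at hlow
      have hfpos : 0 < mCL * ‖f‖ ^ 2 := by positivity
      nlinarith
    -- combine
    have habs : ‖w i‖ = (w i).re := by
      have hw' : w i = ((w i).re : ℂ) := by
        apply Complex.ext <;> simp [him]
      rw [hw', Complex.norm_real, Real.norm_eq_abs]
      simpa using abs_of_pos hre_pos
    exact ⟨him, habs ▸ hwlb, habs ▸ hwub⟩
  refine ⟨‖Cinv‖⁻¹, ‖C‖, by positivity, ?_, fun i => key i⟩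
  exact (key i₀).2.1.trans (key i₀).2.2
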